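/- Let S be a rooted tree viewed as a graph, let (C, M) be a König cover of S, and let r ∈ S^*. Suppose the subtree of S above r is the combination at root r of a family of trees ⟨T_i : i ∈ X⟩ (X ⊆ ℕ), i.e., it equals {r} ∪ { r ++ [c(i,j)] ++ σ : i ∈ X, j ∈ {0,1}, σ ∈ T_i }, where c is a fixed injection of ℕ × {0,1} into ℕ and r_{i,j} = r ++ [c(i,j)]. Then there exists a function assigning to each i ∈ X an element r_i ∈ { r_{i,0}, r_{i,1} } such that: every r_i belongs to S^*, and r ∉ C if and only if r_i ∈ C for every i ∈ X. -/

import Mathlib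

/-- `(C, M)` is a König cover of the simple graph `G`. -/
def IsKonigCover {V : Type*} (G : SimpleGraph V) (C : Set V) (M : Set (Sym2 V)) : Prop :=
  M ⊆ G.edgeSet ∧
  (M.Pairwise fun e f => ∀ v, v ∈ e → v ∉ f) ∧
  (∀ e ∈ G.edgeSet, ∃ v ∈ e, v ∈ C) ∧
  (∀ e ∈ M, ∃! v, v ∈ e ∧ v ∈ C) ∧
  (∀ v ∈ C, ∃ e ∈ M, v ∈ e)

/-- A tree `T ⊆ List ℕ` viewed as a graph: edges join each `σ ∈ T` to its one-step
extensions in `T`. -/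
def treeGraph (T : Set (List ℕ)) : SimpleGraph (List ℕ) where
  Adj s t := s ∈ T ∧ t ∈ T ∧ ((∃ n, t = s ++ [n]) ∨ ∃ n, s = t ++ [n])
  symm := by
    constructor
    rintro s t ⟨hs, ht, h | h⟩
    · exact ⟨ht, hs, Or.inr h⟩
    · exact ⟨ht, hs, Or.inl h⟩
  loopless := by
    constructor
    rintro s ⟨-, -, ⟨n, h⟩ | ⟨n, h⟩⟩ <;>
      simpa using congrArg List.length h

/-- `T` is a rooted tree with root `r`: `T = { r ++ σ : σ ∈ T₀ }` for some prefix-closed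
`T₀` containing the empty list. -/
def IsRootedTree (r : List ℕ) (T : Set (List ℕ)) : Prop :=
  ∃ T₀ : Set (List ℕ), [] ∈ T₀ ∧ (∀ ⦃σ τ : List ℕ⦄, σ <+: τ → τ ∈ T₀ → σ ∈ T₀) ∧
    T = (fun σ => r ++ σ) '' T₀

/-- `T^*` for a rooted tree `T` with root `r` and a König cover `(C, M)`:
those `t ∈ T` such that every `s` with `r ≺ s ⪯ t` satisfies `s ∉ C` or
`{s.dropLast, s} ∉ M`. -/
def Tstar (r : List ℕ) (T : Set (List ℕ)) (C : Set (List ℕ))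
    (M : Set (Sym2 (List ℕ))) : Set (List ℕ) :=
  {t ∈ T | ∀ s : List ℕ, r <+: s → r ≠ s → s <+: t →
    s ∉ C ∨ s(s.dropLast, s) ∉ M}


/-- The tree obtained by combining the trees `⟨T i : i ∈ X⟩` at a root `r`: two copies
of each `T i` are adjoined to `r`, using the injection `c(i, j) = 2 * i + j` of
`ℕ × {0, 1}` into `ℕ`. -/
def combineAt (r : List ℕ) (X : Set ℕ) (T : ℕ → Set (List ℕ)) : Set (List ℕ) :=
  {r} ∪ {l | ∃ i ∈ X, ∃ j : Fin 2, ∃ σ ∈ T i, l = r ++ [2 * i + j] ++ σ}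

/-- Let `(C, M)` be a König cover of a rooted tree `S` with root `r₀`, and let
`r ∈ S^*` be such that the subtree of `S` above `r` is the combination at root `r` of
the trees `⟨T i : i ∈ X⟩`. Then one can choose for each `i ∈ X` one of
`r ++ [2i]`, `r ++ [2i+1]` — call it `g i` — so that each `g i` lies in `S^*`, and
`r ∉ C` iff `g i ∈ C` for every `i ∈ X`. -/
theorem statement12 (r₀ : List ℕ) (S : Set (List ℕ)) (hS : IsRootedTree r₀ S)
    (C : Set (List ℕ)) (M : Set (Sym2 (List ℕ)))
    (h : IsKonigCover (treeGraph S) C M)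
    (r : List ℕ) (hr : r ∈ Tstar r₀ S C M)
    (X : Set ℕ) (T : ℕ → Set (List ℕ))
    (hT : ∀ i ∈ X, [] ∈ T i ∧ ∀ ⦃σ τ : List ℕ⦄, σ <+: τ → τ ∈ T i → σ ∈ T i)
    (hsub : {u ∈ S | r <+: u} = combineAt r X T) :
    ∃ g : ℕ → List ℕ,
      (∀ i ∈ X, (g i = r ++ [2 * i] ∨ g i = r ++ [2 * i + 1]) ∧
        g i ∈ Tstar r₀ S C M) ∧
      (r ∉ C ↔ ∀ i ∈ X, g i ∈ C) := by
  classical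
  obtain ⟨hrS, hrStar⟩ := hr
  have hr₀r : r₀ <+: r := by
    obtain ⟨T₀, -, -, hST⟩ := hS
    rw [hST] at hrS
    obtain ⟨σ, -, rfl⟩ := hrS
    exact ⟨σ, rfl⟩
  obtain ⟨hME, hMpair, hcov, huniq, hmatch⟩ := h
  -- children are in S
  have hchild : ∀ i ∈ X, ∀ j : Fin 2, r ++ [2 * i + (j : ℕ)] ∈ S := by
    intro i hi j
    have : r ++ [2 * i + (j : ℕ)] ∈ combineAt r X T := by
      right
      exact ⟨i, hi, j, [], (hT i hi).1, by simp⟩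
    rw [← hsub] at this
    exact this.1
  have hchild0 : ∀ i ∈ X, r ++ [2 * i] ∈ S := by
    intro i hi; simpa using hchild i hi 0
  have hchild1 : ∀ i ∈ X, r ++ [2 * i + 1] ∈ S := by
    intro i hi; simpa using hchild i hi 1
  have hadj : ∀ n : ℕ, r ++ [n] ∈ S → (treeGraph S).Adj r (r ++ [n]) :=
    fun n hn => ⟨hrS, hn, Or.inl ⟨n, rfl⟩⟩
  -- prefix analysis of a child
  have hpre : ∀ (n : ℕ) (s : List ℕ), s <+: r ++ [n] → s <+: r ∨ s = r ++ [n] := by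
    rintro n s ⟨u, hu⟩
    rcases u.eq_nil_or_concat with rfl | ⟨u', a, rfl⟩
    · right; simpa using hu
    · left
      refine ⟨u', ?_⟩
      have hu' : (s ++ u') ++ [a] = r ++ [n] := by
        simpa [List.append_assoc] using hu
      have := congrArg List.dropLast hu'
      simpa [List.dropLast_concat] using this
  -- membership of children in Tstar
  have hTstarChild : ∀ n : ℕ, r ++ [n] ∈ S →
      (r ++ [n] ∉ C ∨ s(r, r ++ [n]) ∉ M) → r ++ [n] ∈ Tstar r₀ S C M := by
    intro n hn hcond
    refine ⟨hn, fun s hs hne hspre => ?_⟩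
    rcases hpre n s hspre with hsr | rfl
    · exact hrStar s hs hne hsr
    · simpa [List.dropLast_concat] using hcond
  by_cases hrC : r ∈ C
  · -- r ∈ C : it is matched to some child r ++ [2 i₀ + j₀], which is not in C
    obtain ⟨e, heM, hre⟩ := hmatch r hrC
    obtain ⟨t, rfl⟩ := Sym2.mem_iff_exists.mp hre
    have hadjrt : (treeGraph S).Adj r t := ((treeGraph S).mem_edgeSet).mp (hME heM)
    obtain ⟨-, htS, ⟨n, rfl⟩ | ⟨n, hn⟩⟩ := hadjrt
    · -- t = r ++ [n] : identify n = 2 i₀ + j₀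
      have htc : r ++ [n] ∈ combineAt r X T := by
        rw [← hsub]; exact ⟨htS, ⟨[n], rfl⟩⟩
      rcases htc with hteq | ⟨i₀, hi₀, j₀, σ, hσ, hteq⟩
      · exact absurd (congrArg List.length hteq) (by simp)
      rw [List.append_assoc] at hteq
      have h2 := List.append_cancel_left hteq
      obtain ⟨rfl, rfl⟩ : n = 2 * i₀ + (j₀ : ℕ) ∧ σ = [] := by
        cases σ with
        | nil => simp at h2; exact ⟨h2, rfl⟩
        | cons a l => simp at h2
      -- the matched child is not in C
      have htC : r ++ [2 * i₀ + (j₀ : ℕ)] ∉ C := by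
        intro htC
        obtain ⟨v, -, hvuniq⟩ := huniq _ heM
        have h1 : r = v := hvuniq r ⟨Sym2.mem_mk_left _ _, hrC⟩
        have h2 : r ++ [2 * i₀ + (j₀ : ℕ)] = v :=
          hvuniq _ ⟨Sym2.mem_mk_right _ _, htC⟩
        have := h1.trans h2.symm
        simpa using congrArg List.length this
      -- for i ≠ i₀, the edge to r ++ [2 i] is not in M
      have hother : ∀ i, i ≠ i₀ → s(r, r ++ [2 * i]) ∉ M := by
        intro i hii hiM
        by_cases heq : s(r, r ++ [2 * i]) = s(r, r ++ [2 * i₀ + (j₀ : ℕ)])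
        · rw [Sym2.eq_iff] at heq
          rcases heq with ⟨-, hh⟩ | ⟨hh, -⟩
          · have h3 : 2 * i = 2 * i₀ + (j₀ : ℕ) := by simpa using hh
            have h4 := j₀.2
            omega
          · simpa using congrArg List.length hh
        · exact hMpair hiM heM heq r (Sym2.mem_mk_left _ _) (Sym2.mem_mk_left _ _)
      refine ⟨fun i => if i = i₀ then r ++ [2 * i₀ + (j₀ : ℕ)] else r ++ [2 * i], ?_, ?_⟩
      · intro i hi
        by_cases hii : i = i₀
        · subst hii
          constructor
          · have hj2 : (j₀ : ℕ) < 2 := j₀.2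
            have hj : (j₀ : ℕ) = 0 ∨ (j₀ : ℕ) = 1 := by omega
            rcases hj with hj | hj
            · left; simp [hj]
            · right; simp [hj]
          · simpa using hTstarChild _ htS (Or.inl htC)
        · constructor
          · left; simp [hii]
          · simpa [hii] using hTstarChild _ (hchild0 i hi) (Or.inr (hother i hii))
      · constructor
        · intro hc; exact absurd hrC hc
        · intro hall
          have h5 : r ++ [2 * i₀ + (j₀ : ℕ)] ∈ C := by simpa using hall i₀ hi₀
          exact absurd h5 htC
    · -- t is the parent of r : contradicts r ∈ Tstar
      exfalso
      have hr₀t : r₀ <+: t := by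
        obtain ⟨T₀, -, -, hST⟩ := hS
        rw [hST] at htS
        obtain ⟨σ, -, rfl⟩ := htS
        exact ⟨σ, rfl⟩
      have hne : r₀ ≠ r := by
        intro heq
        have h1 := hr₀t.length_le
        have h2 := congrArg List.length hn
        simp [← heq] at h2
        omega
      rcases hrStar r hr₀r hne List.prefix_rfl with hc | hm
      · exact hc hrC
      · apply hm
        have hdl : s(r.dropLast, r) = s(r, t) := by
          rw [hn, List.dropLast_concat, ← hn, Sym2.eq_swap]
        rw [hdl]
        exact heM
  · -- r ∉ C : both children of each i are in C; pick one whose edge is not in M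
    refine ⟨fun i => if s(r, r ++ [2 * i]) ∈ M then r ++ [2 * i + 1] else r ++ [2 * i],
      ?_, ?_⟩
    · intro i hi
      by_cases hiM : s(r, r ++ [2 * i]) ∈ M
      · constructor
        · right; simp [hiM]
        · have h1M : s(r, r ++ [2 * i + 1]) ∉ M := by
            intro h1M
            by_cases heq : s(r, r ++ [2 * i + 1]) = s(r, r ++ [2 * i])
            · rw [Sym2.eq_iff] at heq
              rcases heq with ⟨-, hh⟩ | ⟨hh, -⟩
              · have h3 : 2 * i + 1 = 2 * i := by simpa using hh
                omega
              · exact absurd (congrArg List.length hh) (by simp)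
            · exact hMpair h1M hiM heq r (Sym2.mem_mk_left _ _) (Sym2.mem_mk_left _ _)
          simpa [hiM] using hTstarChild _ (hchild1 i hi) (Or.inr h1M)
      · constructor
        · left; simp [hiM]
        · simpa [hiM] using hTstarChild _ (hchild0 i hi) (Or.inr hiM)
    · constructor
      · intro _ i hi
        by_cases hiM : s(r, r ++ [2 * i]) ∈ M
        · simp only [if_pos hiM]
          obtain ⟨v, hve, hvC⟩ :=
            hcov _ (((treeGraph S).mem_edgeSet).mpr (hadj _ (hchild1 i hi)))
          rcases Sym2.mem_iff.mp hve with rfl | rfl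
          · exact absurd hvC hrC
          · exact hvC
        · simp only [if_neg hiM]
          obtain ⟨v, hve, hvC⟩ :=
            hcov _ (((treeGraph S).mem_edgeSet).mpr (hadj _ (hchild0 i hi)))
          rcases Sym2.mem_iff.mp hve with rfl | rfl
          · exact absurd hvC hrC
          · exact hvC
      · exact fun _ => hrC
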